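/- Let M be a regular matroid with an acyclic circuit signature σ (a choice, for each circuit, of one of its two signed versions, such that no nonzero nonnegative linear combination of the chosen signed circuits equals zero). Then for any element e of the ground set that is not a coloop, the deletion signature σ∖e = {C∖e : C ∈ σ} ∩ SignedCircuits(M∖e) is an acyclic circuit signature of M∖e. -/

import Mathlib

open Matrix

/-- The support of a vector. -/
def supp {α : Type*} (v : α → ℝ) : Set α := {x | v x ≠ 0}

/-- A vector is simple if all entries lie in `{-1,0,1}`. -/
def Simple {α : Type*} (v : α → ℝ) : Prop := ∀ x, v x = -1 ∨ v x = 0 ∨ v x = 1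

/-- A signed circuit of the regular matroid realized by `A`: a simple kernel vector
with support minimal among supports of nonzero kernel vectors. -/
def SignedCircuit {m E : Type*} [Fintype E] (A : Matrix m E ℝ) (C : E → ℝ) : Prop :=
  A.mulVec C = 0 ∧ C ≠ 0 ∧ Simple C ∧
    ∀ D : E → ℝ, A.mulVec D = 0 → D ≠ 0 → supp D ⊆ supp C → supp D = supp C

/-- A signed cocircuit: a simple row-space vector with support minimal among
supports of nonzero row-space vectors. -/
def SignedCocircuit {m E : Type*} [Fintype m] (A : Matrix m E ℝ) (C : E → ℝ) : Prop :=
  (∃ y, Matrix.vecMul y A = C) ∧ C ≠ 0 ∧ Simple C ∧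
    ∀ D : E → ℝ, (∃ y, Matrix.vecMul y A = D) → D ≠ 0 → supp D ⊆ supp C → supp D = supp C

open scoped Classical

/-- Restriction of a vector to the coordinates other than `e`. -/
def restr {E : Type*} (e : E) (C : E → ℝ) : {x : E // x ≠ e} → ℝ := fun x => C x.1

/-- `σ` is a signature for the collection `SC` of signed circuits (or cocircuits):
it consists of members of `SC` and, for each member of `SC`, contains exactly one of
the two opposite signed versions. -/
def SigOf {α : Type*} (SC : Set (α → ℝ)) (σ : Set (α → ℝ)) : Prop :=
  σ ⊆ SC ∧ ∀ C ∈ SC, Xor' (C ∈ σ) (-C ∈ σ)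

/-- A signature is acyclic if no nonzero nonnegative linear combination of its
members vanishes. -/
def AcyclicSig {α : Type*} (σ : Set (α → ℝ)) : Prop :=
  ∀ S : Finset (α → ℝ), ↑S ⊆ σ → ∀ lam : (α → ℝ) → ℝ,
    (∀ C ∈ S, 0 ≤ lam C) → ∑ C ∈ S, lam C • C = 0 → ∀ C ∈ S, lam C = 0

/-- The signed circuits of the contraction `M/e`: the support-minimal nonzero
restrictions of signed circuits of `M`. -/
def SCContr {m E : Type*} [Fintype E] (A : Matrix m E ℝ) (e : E) :
    Set ({x : E // x ≠ e} → ℝ) :=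
  {D | (∃ C, SignedCircuit A C ∧ restr e C = D) ∧ D ≠ 0 ∧
    ∀ D' : {x : E // x ≠ e} → ℝ, (∃ C', SignedCircuit A C' ∧ restr e C' = D') →
      D' ≠ 0 → supp D' ⊆ supp D → supp D' = supp D}

/-- The signed circuits of the deletion `M∖e`: restrictions of signed circuits of `M`
vanishing at `e`. -/
def SCDel {m E : Type*} [Fintype E] (A : Matrix m E ℝ) (e : E) :
    Set ({x : E // x ≠ e} → ℝ) :=
  {D | ∃ C, SignedCircuit A C ∧ C e = 0 ∧ restr e C = D}

/-- The signed cocircuits of the contraction `M/e`: restrictions of signed cocircuits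
of `M` vanishing at `e`. -/
def SCstarContr {m E : Type*} [Fintype m] (A : Matrix m E ℝ) (e : E) :
    Set ({x : E // x ≠ e} → ℝ) :=
  {D | ∃ C, SignedCocircuit A C ∧ C e = 0 ∧ restr e C = D}

/-- The signed cocircuits of the deletion `M∖e`: the support-minimal nonzero
restrictions of signed cocircuits of `M`. -/
def SCstarDel {m E : Type*} [Fintype m] (A : Matrix m E ℝ) (e : E) :
    Set ({x : E // x ≠ e} → ℝ) :=
  {D | (∃ C, SignedCocircuit A C ∧ restr e C = D) ∧ D ≠ 0 ∧
    ∀ D' : {x : E // x ≠ e} → ℝ, (∃ C', SignedCocircuit A C' ∧ restr e C' = D') →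
      D' ≠ 0 → supp D' ⊆ supp D → supp D' = supp D}

/-- Deletion/contraction of a signature: restrict the members and keep those that are
signed circuits (resp. cocircuits) of the minor, whose collection is `SC'`. -/
def minorSig {E : Type*} (e : E) (σ : Set (E → ℝ)) (SC' : Set ({x : E // x ≠ e} → ℝ)) :
    Set ({x : E // x ≠ e} → ℝ) :=
  {D | ∃ C ∈ σ, restr e C = D} ∩ SC'

/-- `B` indexes a basis of the column space of `A` (i.e. a basis of the regular
matroid realized by `A`). -/
def IsBasisSet {m E : Type*} (A : Matrix m E ℝ) (B : Set E) : Prop :=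
  LinearIndependent ℝ (fun x : B => fun i => A i x.1) ∧
    ∀ y : E, (fun i => A i y) ∈ Submodule.span ℝ (Set.range fun x : B => fun i => A i x.1)

/-- The fourientation associated to a basis `B` and a circuit signature `σ`:
elements of `B` are bi-oriented, and each `x ∉ B` is oriented by the sign given by
the member of `σ` supported on the fundamental circuit of `x` with respect to `B`. -/
noncomputable def Fb {α : Type*} (σ : Set (α → ℝ)) (B : Set α) (x : α) : Set ℝ :=
  if x ∈ B then ({-1, 1} : Set ℝ)
  else {c | ∃ C ∈ σ, x ∈ supp C ∧ supp C ⊆ B ∪ {x} ∧ c = C x}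

/-- Compatibility of a simple 1-chain with a fourientation. -/
def CompatF {α : Type*} (C : α → ℝ) (F : α → Set ℝ) : Prop :=
  ∀ x, C x ≠ 0 → C x ∈ F x

/-- Pointwise negation of a fourientation. -/
def negF {α : Type*} (F : α → Set ℝ) : α → Set ℝ := fun x => (fun s : ℝ => -s) '' F x

/-- A circuit signature `σ` (for circuit collection `SC` and basis collection
`Bases`) is triangulating if for distinct bases `B₁ ≠ B₂` the fourientation
`F(B₁,σ) ∩ -F(B₂,σ)` is compatible with no signed circuit. -/
def Triang {α : Type*} (SC : Set (α → ℝ)) (Bases : Set (Set α)) (σ : Set (α → ℝ)) :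
    Prop :=
  ∀ B₁ ∈ Bases, ∀ B₂ ∈ Bases, B₁ ≠ B₂ → ∀ C ∈ SC,
    ¬ CompatF C (fun x => Fb σ B₁ x ∩ negF (Fb σ B₂) x)

/-- A cocircuit signature `σ*` is triangulating if for distinct bases `B₁ ≠ B₂` the
fourientation `F(B₁,σ*) ∩ -F(B₂,σ*)` is compatible with no signed cocircuit; here
`F(B,σ*)` bi-orients the complement of `B`. -/
def TriangCo {α : Type*} (SCstar : Set (α → ℝ)) (Bases : Set (Set α))
    (σs : Set (α → ℝ)) : Prop :=
  ∀ B₁ ∈ Bases, ∀ B₂ ∈ Bases, B₁ ≠ B₂ → ∀ D ∈ SCstar,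
    ¬ CompatF D (fun x => Fb σs B₁ᶜ x ∩ negF (Fb σs B₂ᶜ) x)

set_option linter.unusedSectionVars false

section Aux
variable {m E : Type*} [Fintype m] [Fintype E] [DecidableEq E]

/-- extension by zero at `e` -/
noncomputable def extz (e : E) (D : {x : E // x ≠ e} → ℝ) : E → ℝ :=
  fun x => if h : x = e then 0 else D ⟨x, h⟩

lemma restr_extz (e : E) (D : {x : E // x ≠ e} → ℝ) : restr e (extz e D) = D := by
  funext x; simp [restr, extz, x.2]

lemma extz_restr (e : E) (C : E → ℝ) (he : C e = 0) : extz e (restr e C) = C := by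
  funext x
  by_cases h : x = e
  · subst h; simpa [extz] using he.symm
  · simp [extz, restr, h]

lemma extz_inj (e : E) : Function.Injective (extz e) := by
  intro a b h
  have := congrArg (restr e) h
  rwa [restr_extz, restr_extz] at this

lemma extz_neg (e : E) (D : {x : E // x ≠ e} → ℝ) : extz e (-D) = -extz e D := by
  funext x; by_cases h : x = e <;> simp [extz, h]

lemma sum_ne (e : E) (g : E → ℝ) (he : g e = 0) :
    ∑ x : {x : E // x ≠ e}, g x.1 = ∑ x, g x := by
  rw [← Finset.sum_subtype (Finset.univ.erase e) (fun x => by simp) g]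
  exact Finset.sum_erase _ he

lemma mulVec_extz (A : Matrix m E ℝ) (e : E) (D : {x : E // x ≠ e} → ℝ) :
    A.mulVec (extz e D) = (A.submatrix id (Subtype.val : {x : E // x ≠ e} → E)).mulVec D := by
  funext i
  simp only [Matrix.mulVec, dotProduct, Matrix.submatrix_apply, id]
  rw [← sum_ne e (fun x => A i x * extz e D x) (by simp [extz])]
  refine Finset.sum_congr rfl fun x _ => ?_
  simp [extz, x.2]

lemma extz_ne_zero (e : E) {D : {x : E // x ≠ e} → ℝ} (hD : D ≠ 0) : extz e D ≠ 0 := by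
  intro h; exact hD (by rw [← restr_extz e D, h]; funext x; simp [restr])

lemma restr_ne_zero (e : E) {C : E → ℝ} (hC : C ≠ 0) (he : C e = 0) : restr e C ≠ 0 := by
  intro h
  apply hC
  funext x
  by_cases hx : x = e
  · rw [hx, he]; rfl
  · exact congrFun h ⟨x, hx⟩

lemma supp_extz_restr (e : E) {C : E → ℝ} (he : C e = 0) {D : {x : E // x ≠ e} → ℝ}
    (h : supp (restr e C) = supp D) : supp C = supp (extz e D) := by
  ext x
  by_cases hx : x = e
  · subst hx; simp [supp, he, extz]
  · have := Set.ext_iff.mp h ⟨x, hx⟩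
    simpa [supp, restr, extz, hx] using this

lemma circuit_extz {A : Matrix m E ℝ} {e : E} {D : {x : E // x ≠ e} → ℝ}
    (hD : SignedCircuit (A.submatrix id (Subtype.val : {x : E // x ≠ e} → E)) D) :
    SignedCircuit A (extz e D) := by
  obtain ⟨hk, hnz, hs, hmin⟩ := hD
  refine ⟨by rw [mulVec_extz]; exact hk, extz_ne_zero e hnz, ?_, ?_⟩
  · intro x; by_cases h : x = e <;> simp [extz, h]
    exact hs _
  · intro C' hC'k hC'nz hC'supp
    have heC' : C' e = 0 := by
      by_contra h
      exact (hC'supp h) (by simp [supp, extz])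
    have h1 : (A.submatrix id (Subtype.val : {x : E // x ≠ e} → E)).mulVec (restr e C') = 0 := by
      rw [← mulVec_extz, extz_restr e C' heC']; exact hC'k
    have h2 := hmin (restr e C') h1 (restr_ne_zero e hC'nz heC') ?_
    · exact supp_extz_restr e heC' h2
    · intro x hx
      have : C' x.1 ≠ 0 := hx
      have := hC'supp this
      simpa [supp, extz, x.2] using this

lemma circuit_restr {A : Matrix m E ℝ} {e : E} {C : E → ℝ}
    (hC : SignedCircuit A C) (he : C e = 0) :
    SignedCircuit (A.submatrix id (Subtype.val : {x : E // x ≠ e} → E)) (restr e C) := by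
  obtain ⟨hk, hnz, hs, hmin⟩ := hC
  refine ⟨?_, restr_ne_zero e hnz he, fun x => hs x.1, ?_⟩
  · rw [← mulVec_extz, extz_restr e C he]; exact hk
  · intro D' hD'k hD'nz hD'supp
    have h2 := hmin (extz e D') (by rw [mulVec_extz]; exact hD'k) (extz_ne_zero e hD'nz) ?_
    · ext x
      have := Set.ext_iff.mp h2 x.1
      simpa [supp, restr, extz, x.2] using this
    · intro x hx
      by_cases hxe : x = e
      · exfalso; apply hx; simp [supp, extz, hxe]
      · have : D' ⟨x, hxe⟩ ≠ 0 := by simpa [supp, extz, hxe] using hx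
        exact hD'supp this

/-- if a circuit of `A` restricts (away from `e`) to a nonzero kernel vector of the
deletion, then it vanishes at `e`. -/
lemma Ce_zero {A : Matrix m E ℝ} {e : E} {C : E → ℝ} (hC : SignedCircuit A C)
    (hk : (A.submatrix id (Subtype.val : {x : E // x ≠ e} → E)).mulVec (restr e C) = 0)
    (hnz : restr e C ≠ 0) : C e = 0 := by
  by_contra hce
  obtain ⟨hCk, hCnz, hCs, hCmin⟩ := hC
  -- column e of A is zero
  have hcol : ∀ i, A i e = 0 := by
    intro i
    have h1 : A.mulVec (extz e (restr e C)) i = 0 := by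
      rw [mulVec_extz]; rw [hk]; rfl
    have h2 : A.mulVec C i = 0 := by rw [hCk]; rfl
    have h3 : A.mulVec C i - A.mulVec (extz e (restr e C)) i = A i e * C e := by
      simp only [Matrix.mulVec, dotProduct, ← Finset.sum_sub_distrib]
      rw [Finset.sum_eq_single e]
      · simp [extz]
      · intro b _ hb; simp [extz, restr, hb]
      · simp
    have : A i e * C e = 0 := by rw [← h3, h1, h2]; ring
    exact (mul_eq_zero.mp this).resolve_right hce
  -- the indicator of e is a nonzero kernel vector supported in supp C
  set δ : E → ℝ := fun x => if x = e then 1 else 0 with hδ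
  have hδk : A.mulVec δ = 0 := by
    funext i
    simp only [Matrix.mulVec, dotProduct, hδ]
    rw [Finset.sum_eq_single e (fun b _ hb => by simp [hb]) (by simp)]
    simp [hcol]
  have hδnz : δ ≠ 0 := by
    intro h; have := congrFun h e; simp [hδ] at this
  have hδsupp : supp δ ⊆ supp C := by
    intro x hx
    have : x = e := by by_contra h; exact hx (by simp [supp, hδ, h])
    subst this; exact hce
  have := hCmin δ hδk hδnz hδsupp
  have hsC : supp C = {e} := by
    rw [← this]; ext x; by_cases h : x = e <;> simp [supp, hδ, h]
  obtain ⟨x, hx⟩ : ∃ x, restr e C x ≠ 0 := by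
    by_contra h; push_neg at h; exact hnz (funext h)
  have : x.1 ∈ supp C := hx
  rw [hsC] at this
  exact x.2 this

end Aux

section Aux2
variable {m E : Type*} [Fintype m] [Fintype E] [DecidableEq E]

lemma supp_neg {α : Type*} (C : α → ℝ) : supp (-C) = supp C := by
  ext x; simp [supp]

lemma circuit_neg {A : Matrix m E ℝ} {C : E → ℝ} (h : SignedCircuit A C) :
    SignedCircuit A (-C) := by
  obtain ⟨hk, hnz, hs, hmin⟩ := h
  refine ⟨by rw [Matrix.mulVec_neg, hk, neg_zero], neg_ne_zero.mpr hnz, ?_, ?_⟩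
  · intro x; rcases hs x with h | h | h <;> simp [h]
  · intro D hDk hDnz hDsupp
    rw [supp_neg] at hDsupp ⊢
    exact hmin D hDk hDnz hDsupp

end Aux2

theorem acyclic_circuit_signature_deletion
    {m E : Type*} [Fintype m] [Fintype E] [DecidableEq E] (A : Matrix m E ℝ)
    (hA : A.IsTotallyUnimodular) (e : E)
    (hcoloop : ¬ ∃ w : E → ℝ, (∃ y, Matrix.vecMul y A = w) ∧ w ≠ 0 ∧ supp w = {e})
    (σ : Set (E → ℝ)) (hσ : SigOf {C | SignedCircuit A C} σ) (hac : AcyclicSig σ) :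
    SigOf {C | SignedCircuit (A.submatrix id (Subtype.val : {x : E // x ≠ e} → E)) C}
      (minorSig e σ
        {C | SignedCircuit (A.submatrix id (Subtype.val : {x : E // x ≠ e} → E)) C}) ∧
    AcyclicSig (minorSig e σ
      {C | SignedCircuit (A.submatrix id (Subtype.val : {x : E // x ≠ e} → E)) C}) := by

  set A' := A.submatrix id (Subtype.val : {x : E // x ≠ e} → E) with hA'
  set SC' : Set ({x : E // x ≠ e} → ℝ) := {C | SignedCircuit A' C} with hSC'
  have key : ∀ D, SignedCircuit A' D → (D ∈ minorSig e σ SC' ↔ extz e D ∈ σ) := by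
    intro D hD
    constructor
    · rintro ⟨⟨C, hCσ, hrC⟩, _⟩
      have hCcirc : SignedCircuit A C := hσ.1 hCσ
      have hk : A'.mulVec (restr e C) = 0 := by rw [hrC]; exact hD.1
      have hnz : restr e C ≠ 0 := by rw [hrC]; exact hD.2.1
      have hCe : C e = 0 := Ce_zero hCcirc hk hnz
      have hCeq : C = extz e D := by rw [← hrC, extz_restr e C hCe]
      rwa [← hCeq]
    · intro h
      exact ⟨⟨extz e D, h, restr_extz e D⟩, hD⟩
  constructor
  · refine ⟨Set.inter_subset_right, ?_⟩
    intro D hD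
    have hDc : SignedCircuit A' D := hD
    have hext := circuit_extz hDc
    have hx := hσ.2 (extz e D) hext
    have e1 := key D hDc
    have e2 := key (-D) (circuit_neg hDc)
    rw [extz_neg] at e2
    simp only [Xor'] at hx ⊢
    rw [e1, e2]; exact hx
  · intro S hS lam hnn hsum D hD
    set S' : Finset (E → ℝ) := S.image (extz e) with hS'
    set lam' : (E → ℝ) → ℝ := fun C => lam (restr e C) with hlam'
    have hS'σ : ↑S' ⊆ σ := by
      intro C hC
      obtain ⟨D', hD'S, rfl⟩ := Finset.mem_image.mp (by exact_mod_cast hC)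
      have hmem := hS hD'S
      exact (key D' hmem.2).mp hmem
    have h1 : ∀ C ∈ S', 0 ≤ lam' C := by
      intro C hC
      obtain ⟨D', hD'S, rfl⟩ := Finset.mem_image.mp hC
      simpa [hlam', restr_extz] using hnn D' hD'S
    have h2 : ∑ C ∈ S', lam' C • C = 0 := by
      rw [hS', Finset.sum_image (fun a _ b _ h => extz_inj e h)]
      funext x
      simp only [Finset.sum_apply, Pi.smul_apply, smul_eq_mul, Pi.zero_apply]
      by_cases hx : x = e
      · subst hx
        refine Finset.sum_eq_zero fun D' _ => ?_
        simp [extz]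
      · have := congrFun hsum ⟨x, hx⟩
        simp only [Finset.sum_apply, Pi.smul_apply, smul_eq_mul, Pi.zero_apply] at this
        rw [← this]
        refine Finset.sum_congr rfl fun D' _ => ?_
        simp [hlam', restr_extz, extz, hx]
    have := hac S' hS'σ lam' h1 h2 (extz e D) (Finset.mem_image_of_mem _ hD)
    simpa [hlam', restr_extz] using this
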